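/- Key counting step in the cycle gapfulness proof: let B_1, ..., B_n ⊆ [0,1]^n, where B_i depends only on coordinates i and i+1 (mod n), and suppose μ(B_i) > 1/4 for each i. For each i let Δ'_i ⊆ [0,1] and Δ_{i+1} ⊆ [0,1] be minimal measurable sets with μ(B̃_i \ (Δ'_i × Δ_{i+1})) = 0, where B̃_i ⊆ [0,1]^{{i,i+1}} is the base of B_i, and set x_i = μ(Δ_i), x'_i = μ(Δ'_i). Then x'_i x_{i+1} > 1/4 for all i, hence ∏_{i=1}^n (x_i x'_i) > 4^{−n}, hence there exists i with x_i x'_i > 1/4, hence x_i + x'_i > 1 and μ(Δ_i ∩ Δ'_i) > 0. -/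

import Mathlib

open MeasureTheory
open scoped ENNReal

noncomputable def cubeMeasure (m : ℕ) : Measure (Fin m → ℝ) :=
  Measure.pi fun _ => volume.restrict (Set.Icc 0 1)

def DependsOnlyOn {m : ℕ} (A : Set (Fin m → ℝ)) (S : Set (Fin m)) : Prop :=
  ∀ x y : Fin m → ℝ, (∀ j ∈ S, x j = y j) → (x ∈ A ↔ y ∈ A)

lemma cube_cyl {n : ℕ} {i j : Fin n} (hij : i ≠ j) {A C : Set ℝ}
    (hA : MeasurableSet A) (hC : MeasurableSet C)
    (hAs : A ⊆ Set.Icc 0 1) (hCs : C ⊆ Set.Icc 0 1) :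
    cubeMeasure n {x | x i ∈ A ∧ x j ∈ C} = volume A * volume C := by
  have hset : {x : Fin n → ℝ | x i ∈ A ∧ x j ∈ C} =
      Set.pi Set.univ (fun k => if k = i then A else if k = j then C else Set.univ) := by
    ext x
    simp only [Set.mem_setOf_eq, Set.mem_pi, Set.mem_univ, forall_true_left]
    constructor
    · rintro ⟨h1, h2⟩ k
      split_ifs with e1 e2
      · subst e1; exact h1
      · subst e2; exact h2
      · trivial
    · intro h
      refine ⟨?_, ?_⟩
      · have := h i; simpa using this
      · have := h j; simp [hij.symm] at this; exact this
  rw [hset, cubeMeasure, Measure.pi_pi]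
  have hone : ∀ k : Fin n, k ≠ i → k ≠ j →
      (volume.restrict (Set.Icc (0:ℝ) 1)) (if k = i then A else if k = j then C else Set.univ) = 1 := by
    intro k h1 h2
    simp [h1, h2, Real.volume_Icc]
  have hvi : (volume.restrict (Set.Icc (0:ℝ) 1)) A = volume A := by
    rw [Measure.restrict_apply hA, Set.inter_eq_self_of_subset_left hAs]
  have hvj : (volume.restrict (Set.Icc (0:ℝ) 1)) C = volume C := by
    rw [Measure.restrict_apply hC, Set.inter_eq_self_of_subset_left hCs]
  rw [← Finset.mul_prod_erase Finset.univ _ (Finset.mem_univ i)]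
  rw [← Finset.mul_prod_erase _ _ (Finset.mem_erase.mpr ⟨hij.symm, Finset.mem_univ j⟩)]
  rw [Finset.prod_eq_one (fun k hk => by
    simp only [Finset.mem_erase] at hk
    exact hone k hk.2.1 hk.1)]
  simp [hij.symm, hvi, hvj]

theorem stmt10 {n : ℕ} [NeZero n] (hn : 3 ≤ n)
    (B : Fin n → Set (Fin n → ℝ)) (hmeas : ∀ i, MeasurableSet (B i))
    (hdep : ∀ i, DependsOnlyOn (B i) {i, i+1})
    (hB : ∀ i, 1/4 < cubeMeasure n (B i))
    (Δ Δ' : Fin n → Set ℝ)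
    (hΔmeas : ∀ i, MeasurableSet (Δ i)) (hΔ'meas : ∀ i, MeasurableSet (Δ' i))
    (hΔsub : ∀ i, Δ i ⊆ Set.Icc 0 1) (hΔ'sub : ∀ i, Δ' i ⊆ Set.Icc 0 1)
    (hnull : ∀ i, cubeMeasure n (B i \ {x | x i ∈ Δ' i ∧ x (i+1) ∈ Δ (i+1)}) = 0)
    (hmin' : ∀ i, ∀ Γ : Set ℝ, MeasurableSet Γ →
      cubeMeasure n (B i \ {x | x i ∈ Γ}) = 0 → volume (Δ' i) ≤ volume Γ)
    (hmin : ∀ i, ∀ Γ : Set ℝ, MeasurableSet Γ →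
      cubeMeasure n (B i \ {x | x (i+1) ∈ Γ}) = 0 → volume (Δ (i+1)) ≤ volume Γ) :
    (∀ i, (1:ℝ)/4 < (volume (Δ' i)).toReal * (volume (Δ (i+1))).toReal) ∧
    ((1:ℝ)/4)^n < (∏ i : Fin n, (volume (Δ i)).toReal * (volume (Δ' i)).toReal) ∧
    ∃ i : Fin n,
      (1:ℝ)/4 < (volume (Δ i)).toReal * (volume (Δ' i)).toReal ∧
      1 < (volume (Δ i)).toReal + (volume (Δ' i)).toReal ∧
      0 < volume (Δ i ∩ Δ' i) := by
  -- basic bounds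
  have hne : ∀ i : Fin n, i ≠ i + 1 := by
    intro i h
    have h1 : (1 : Fin n) = 0 := by
      have := congrArg (fun z => z - i) h
      simpa [sub_eq_iff_eq_add] using this.symm
    have := (Fin.one_eq_zero_iff (n := n)).mp h1
    omega
  have hΔle : ∀ i, volume (Δ i) ≤ 1 := fun i => by
    have : volume (Δ i) ≤ volume (Set.Icc (0:ℝ) 1) := measure_mono (hΔsub i)
    simpa [Real.volume_Icc] using this
  have hΔ'le : ∀ i, volume (Δ' i) ≤ 1 := fun i => by
    have : volume (Δ' i) ≤ volume (Set.Icc (0:ℝ) 1) := measure_mono (hΔ'sub i)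
    simpa [Real.volume_Icc] using this
  have hΔfin : ∀ i, volume (Δ i) ≠ ⊤ := fun i => (lt_of_le_of_lt (hΔle i) (by norm_num)).ne
  have hΔ'fin : ∀ i, volume (Δ' i) ≠ ⊤ := fun i => (lt_of_le_of_lt (hΔ'le i) (by norm_num)).ne
  have hΔle1 : ∀ i, (volume (Δ i)).toReal ≤ 1 := fun i => by
    have := ENNReal.toReal_mono (by norm_num) (hΔle i); simpa using this
  have hΔ'le1 : ∀ i, (volume (Δ' i)).toReal ≤ 1 := fun i => by
    have := ENNReal.toReal_mono (by norm_num) (hΔ'le i); simpa using this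
  -- key inequality in ENNReal
  have key : ∀ i : Fin n, (1/4 : ℝ≥0∞) < volume (Δ' i) * volume (Δ (i+1)) := by
    intro i
    have h1 : cubeMeasure n (B i) ≤ cubeMeasure n {x | x i ∈ Δ' i ∧ x (i+1) ∈ Δ (i+1)} := by
      calc cubeMeasure n (B i)
          ≤ cubeMeasure n (B i ∩ {x | x i ∈ Δ' i ∧ x (i+1) ∈ Δ (i+1)})
            + cubeMeasure n (B i \ {x | x i ∈ Δ' i ∧ x (i+1) ∈ Δ (i+1)}) :=
            measure_le_inter_add_diff _ _ _
        _ = cubeMeasure n (B i ∩ {x | x i ∈ Δ' i ∧ x (i+1) ∈ Δ (i+1)}) := by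
            rw [hnull i, add_zero]
        _ ≤ cubeMeasure n {x | x i ∈ Δ' i ∧ x (i+1) ∈ Δ (i+1)} :=
            measure_mono Set.inter_subset_right
    have h2 := cube_cyl (hne i) (hΔ'meas i) (hΔmeas (i+1)) (hΔ'sub i) (hΔsub (i+1))
    calc (1/4 : ℝ≥0∞) < cubeMeasure n (B i) := hB i
      _ ≤ _ := h1
      _ = _ := h2
  have key' : ∀ i : Fin n, (1:ℝ)/4 < (volume (Δ' i)).toReal * (volume (Δ (i+1))).toReal := by
    intro i
    have hfin : volume (Δ' i) * volume (Δ (i+1)) ≠ ⊤ :=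
      ENNReal.mul_ne_top (hΔ'fin i) (hΔfin (i+1))
    have := ENNReal.toReal_strict_mono hfin (key i)
    rw [ENNReal.toReal_mul] at this
    calc (1:ℝ)/4 = ((1/4 : ℝ≥0∞)).toReal := by norm_num
      _ < _ := this
  refine ⟨key', ?_, ?_⟩
  · -- product inequality
    have hre : (∏ i : Fin n, (volume (Δ i)).toReal * (volume (Δ' i)).toReal)
        = ∏ i : Fin n, (volume (Δ' i)).toReal * (volume (Δ (i+1))).toReal := by
      rw [Finset.prod_mul_distrib, Finset.prod_mul_distrib]
      rw [Fintype.prod_equiv (Equiv.addRight (1 : Fin n)) (fun i => (volume (Δ (i+1))).toReal)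
        (fun i => (volume (Δ i)).toReal) (fun i => rfl)]
      ring
    rw [hre]
    calc ((1:ℝ)/4)^n = ∏ _i : Fin n, (1:ℝ)/4 := by simp
      _ < _ := Finset.prod_lt_prod_of_nonempty (fun i _ => by norm_num)
          (fun i _ => key' i) Finset.univ_nonempty
  · -- existence
    by_contra hcon
    -- each i fails at least one of the three conditions; show first implies rest
    have main : ∀ i : Fin n, ¬ ((1:ℝ)/4 < (volume (Δ i)).toReal * (volume (Δ' i)).toReal) := by
      intro i h14
      have hsum : 1 < (volume (Δ i)).toReal + (volume (Δ' i)).toReal := by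
        nlinarith [sq_nonneg ((volume (Δ i)).toReal - (volume (Δ' i)).toReal),
          ENNReal.toReal_nonneg (a := volume (Δ i)), ENNReal.toReal_nonneg (a := volume (Δ' i))]
      have hpos : 0 < volume (Δ i ∩ Δ' i) := by
        by_contra hz
        push_neg at hz
        have hz0 : volume (Δ i ∩ Δ' i) = 0 := le_antisymm hz (zero_le)
        have hu : volume (Δ i ∪ Δ' i) ≤ 1 := by
          have : volume (Δ i ∪ Δ' i) ≤ volume (Set.Icc (0:ℝ) 1) :=
            measure_mono (Set.union_subset (hΔsub i) (hΔ'sub i))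
          simpa [Real.volume_Icc] using this
        have heq : volume (Δ i ∪ Δ' i) + volume (Δ i ∩ Δ' i) = volume (Δ i) + volume (Δ' i) :=
          measure_union_add_inter (Δ i) (hΔ'meas i)
        rw [hz0, add_zero] at heq
        have hsum' : volume (Δ i) + volume (Δ' i) ≤ 1 := heq ▸ hu
        have := ENNReal.toReal_mono (by norm_num) hsum'
        rw [ENNReal.toReal_add (hΔfin i) (hΔ'fin i)] at this
        simp at this
        linarith
      exact hcon ⟨i, h14, hsum, hpos⟩
    -- derive contradiction with the product inequality
    have hall : ∀ i : Fin n, (volume (Δ i)).toReal * (volume (Δ' i)).toReal ≤ (1:ℝ)/4 :=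
      fun i => not_lt.mp (main i)
    have hprodle : (∏ i : Fin n, (volume (Δ i)).toReal * (volume (Δ' i)).toReal) ≤ ((1:ℝ)/4)^n := by
      calc (∏ i : Fin n, (volume (Δ i)).toReal * (volume (Δ' i)).toReal)
          ≤ ∏ _i : Fin n, (1:ℝ)/4 := Finset.prod_le_prod
            (fun i _ => mul_nonneg ENNReal.toReal_nonneg ENNReal.toReal_nonneg)
            (fun i _ => hall i)
        _ = ((1:ℝ)/4)^n := by simp
    have hre : (∏ i : Fin n, (volume (Δ i)).toReal * (volume (Δ' i)).toReal)
        = ∏ i : Fin n, (volume (Δ' i)).toReal * (volume (Δ (i+1))).toReal := by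
      rw [Finset.prod_mul_distrib, Finset.prod_mul_distrib]
      rw [Fintype.prod_equiv (Equiv.addRight (1 : Fin n)) (fun i => (volume (Δ (i+1))).toReal)
        (fun i => (volume (Δ i)).toReal) (fun i => rfl)]
      ring
    have hgt : ((1:ℝ)/4)^n < ∏ i : Fin n, (volume (Δ i)).toReal * (volume (Δ' i)).toReal := by
      rw [hre]
      calc ((1:ℝ)/4)^n = ∏ _i : Fin n, (1:ℝ)/4 := by simp
        _ < _ := Finset.prod_lt_prod_of_nonempty (fun i _ => by norm_num)
            (fun i _ => key' i) Finset.univ_nonempty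
    linarith
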